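/- Let q be a primitive ℓ-th root of unity, ℓ ≥ 2, and H_q = H/I the Hopf algebra where H is generated by D₁, D₂, σ^{±1} with relations D₁D₂ = D₂D₁, qσD_i = D_iσ, and I = (D₁^ℓ, D₂^ℓ). Then F = exp_q(t D₁ ⊗ D₂) = \sum_{i=0}^{ℓ-1} (t^i/(i)_q!) D₁^i ⊗ D₂^i ∈ (H_q ⊗ H_q)[[t]] satisfies the universal deformation formula identities: (ε⊗id)(F) = 1⊗1 = (id⊗ε)(F) and [(Δ⊗id)(F)](F⊗1) = [(id⊗Δ)(F)](1⊗F). -/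

import Mathlib

open TensorProduct

/-- The q-integer `(k)_q = 1 + q + ⋯ + q^(k-1)`. -/
noncomputable def qInt (q : ℂ) (k : ℕ) : ℂ := ∑ j ∈ Finset.range k, q ^ j

/-- The q-factorial `(i)_q! = (i)_q (i-1)_q ⋯ (1)_q`. -/
noncomputable def qFact (q : ℂ) (i : ℕ) : ℂ := ∏ j ∈ Finset.range i, qInt q (j + 1)

/-- The Gaussian binomial coefficient, defined by the q-Pascal recursion. -/
noncomputable def gb (q : ℂ) : ℕ → ℕ → ℂ
  | _, 0 => 1
  | 0, _ + 1 => 0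
  | n + 1, k + 1 => q ^ (n - k) * gb q n k + gb q n (k + 1)

lemma gb_zero (q : ℂ) : ∀ n k, n < k → gb q n k = 0
  | _, 0, h => absurd h (Nat.not_lt_zero _)
  | 0, _+1, _ => rfl
  | n+1, k+1, h => by
    simp only [gb, gb_zero q n k (by omega), gb_zero q n (k+1) (by omega)]; ring

lemma gb_self (q : ℂ) : ∀ n, gb q n n = 1
  | 0 => rfl
  | n+1 => by simp [gb, gb_self q n, gb_zero q n (n+1) (by omega)]

lemma qInt_add (q : ℂ) (a b : ℕ) : qInt q (a + b) = qInt q a + q ^ a * qInt q b := by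
  simp [qInt, Finset.sum_range_add, Finset.mul_sum, pow_add]

lemma qFact_succ (q : ℂ) (n : ℕ) : qFact q (n + 1) = qFact q n * qInt q (n + 1) :=
  Finset.prod_range_succ _ _

lemma qFact_mul_gb (q : ℂ) : ∀ n k, k ≤ n →
    qFact q k * qFact q (n - k) * gb q n k = qFact q n
  | n, 0, _ => by simp [qFact, gb]
  | 0, k+1, h => absurd h (by omega)
  | n+1, k+1, h => by
    rcases eq_or_lt_of_le h with h1 | h1
    · obtain rfl : k = n := by omega
      simp [gb, gb_self q k, gb_zero q k (k+1) (by omega), qFact]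
    · have hk : k ≤ n := by omega
      have hk1 : k + 1 ≤ n := by omega
      have e1 : n + 1 - (k + 1) = n - k := by omega
      have IH1 := qFact_mul_gb q n k hk
      have IH2 := qFact_mul_gb q n (k+1) hk1
      simp only [gb, e1]
      rw [mul_add]
      have t1 : qFact q (k+1) * qFact q (n-k) * (q^(n-k) * gb q n k)
          = q^(n-k) * qInt q (k+1) * qFact q n := by
        rw [← IH1, qFact_succ]; ring
      have t2 : qFact q (k+1) * qFact q (n-k) * gb q n (k+1)
          = qInt q (n-k) * qFact q n := by
        rw [← IH2]
        have h3 : qFact q (n-k) = qFact q (n-(k+1)) * qInt q (n-(k+1)+1) := by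
          rw [← qFact_succ]; congr 1; omega
        have h4 : n - (k+1) + 1 = n - k := by omega
        rw [h3, h4]; ring
      have key : qInt q (n + 1) = qInt q (n - k) + q ^ (n - k) * qInt q (k + 1) := by
        rw [← qInt_add q (n - k) (k + 1)]; congr 1; omega
      rw [t1, t2, qFact_succ, key]; ring

lemma qsmul_pow_comm {A : Type*} [Ring A] [Algebra ℂ A] {q : ℂ} {y z : A}
    (h : z * y = q • (y * z)) : ∀ m : ℕ, z ^ m * y = (q ^ m) • (y * z ^ m)
  | 0 => by simp
  | m+1 => by
    rw [pow_succ, mul_assoc, h, mul_smul_comm, ← mul_assoc, qsmul_pow_comm h m,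
      smul_mul_assoc, smul_smul, ← pow_succ', mul_assoc]

/-- The q-binomial theorem for q-commuting elements. -/
lemma qbinom_pow {A : Type*} [Ring A] [Algebra ℂ A] {q : ℂ} {y z : A}
    (h : z * y = q • (y * z)) (n : ℕ) :
    (y + z) ^ n = ∑ k ∈ Finset.range (n+1), gb q n k • (y ^ k * z ^ (n - k)) := by
  induction n with
  | zero => simp [gb]
  | succ n ih =>
    have key2 : ∑ k ∈ Finset.range (n+1), gb q n k • (y^k * z^(n-k+1))
        = ∑ k ∈ Finset.range (n+1), gb q n (k+1) • (y^(k+1) * z^(n-k)) + z^(n+1) := by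
      rw [Finset.sum_range_succ' (fun k => gb q n k • (y^k * z^(n-k+1))) n,
        Finset.sum_range_succ (fun k => gb q n (k+1) • (y^(k+1) * z^(n-k)))]
      rw [gb_zero q n (n+1) (by omega)]
      simp only [zero_smul, add_zero, gb, pow_zero, one_mul, one_smul, Nat.sub_zero]
      congr 1
      refine Finset.sum_congr rfl fun k hk => ?_
      have : n - (k+1) + 1 = n - k := by
        have := Finset.mem_range.mp hk; omega
      rw [this]
    have expand : ∀ k ∈ Finset.range (n+1), gb q n k • (y ^ k * z ^ (n-k)) * (y + z)
        = (q ^ (n-k) * gb q n k) • (y ^ (k+1) * z ^ (n-k))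
          + gb q n k • (y ^ k * z ^ (n-k+1)) := by
      intro k _
      rw [smul_mul_assoc, mul_add, smul_add, mul_assoc, qsmul_pow_comm h (n-k),
        mul_smul_comm, smul_smul, mul_comm (gb q n k), ← mul_assoc (y ^ k) y, ← pow_succ,
        mul_assoc (y ^ k) (z ^ (n-k)) z, ← pow_succ]
    rw [pow_succ, ih, Finset.sum_mul, Finset.sum_congr rfl expand, Finset.sum_add_distrib,
      key2]
    rw [Finset.sum_range_succ' (fun k => gb q (n+1) k • (y^k * z^(n+1-k))) (n+1)]
    simp only [gb, Nat.succ_sub_succ, add_smul, Finset.sum_add_distrib, pow_zero, one_mul,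
      one_smul, Nat.sub_zero]
    abel

lemma qInt_ne_zero {q : ℂ} {ℓ : ℕ} (hq : IsPrimitiveRoot q ℓ) {k : ℕ} (h0 : 0 < k) (h : k < ℓ) :
    qInt q k ≠ 0 := by
  intro hz
  have h2 := geom_sum_mul q k
  rw [show (∑ i ∈ Finset.range k, q ^ i) = qInt q k from rfl, hz, zero_mul] at h2
  exact hq.pow_ne_one_of_pos_of_lt h0.ne' h (by linear_combination -h2)

lemma qFact_ne_zero {q : ℂ} {ℓ : ℕ} (hq : IsPrimitiveRoot q ℓ) {i : ℕ} (h : i < ℓ) :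
    qFact q i ≠ 0 := by
  refine Finset.prod_ne_zero_iff.mpr fun j hj => ?_
  have := Finset.mem_range.mp hj
  exact qInt_ne_zero hq (by omega) (by omega)

lemma qFact_eq_zero {q : ℂ} {ℓ : ℕ} (hℓ : 2 ≤ ℓ) (hq : IsPrimitiveRoot q ℓ) {i : ℕ}
    (h : ℓ ≤ i) : qFact q i = 0 := by
  apply Finset.prod_eq_zero (i := ℓ - 1) (Finset.mem_range.mpr (by omega))
  rw [show ℓ - 1 + 1 = ℓ by omega]
  exact hq.geom_sum_eq_zero (by omega)

lemma scalar_eq {q : ℂ} {ℓ : ℕ} (hq : IsPrimitiveRoot q ℓ)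
    {i j k : ℕ} (hki : k ≤ i) (hi : i < ℓ) (hj : j < ℓ) (hkj : k + j < ℓ) :
    (qFact q i)⁻¹ * (qFact q j)⁻¹ * gb q i k
      = (qFact q (k+j))⁻¹ * (qFact q (i-k))⁻¹ * gb q (k+j) k := by
  have h1 := qFact_mul_gb q i k hki
  have h2 := qFact_mul_gb q (k+j) k (by omega)
  rw [show k + j - k = j by omega] at h2
  have nk : qFact q k ≠ 0 := qFact_ne_zero hq (by omega)
  have nik : qFact q (i-k) ≠ 0 := qFact_ne_zero hq (by omega)
  have nj : qFact q j ≠ 0 := qFact_ne_zero hq hj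
  have ni : qFact q i ≠ 0 := qFact_ne_zero hq hi
  have nkj : qFact q (k+j) ≠ 0 := qFact_ne_zero hq hkj
  have g1 : gb q i k = qFact q i * (qFact q k)⁻¹ * (qFact q (i-k))⁻¹ := by
    field_simp; linear_combination h1
  have g2 : gb q (k+j) k = qFact q (k+j) * (qFact q k)⁻¹ * (qFact q j)⁻¹ := by
    field_simp; linear_combination h2
  rw [g1, g2]
  field_simp

/-- Theorem 3.2 (root of unity case): in the Hopf algebra `H_q` (a bialgebra `H`
with elements `D₁, D₂, σ^{±1}` satisfying `D₁D₂ = D₂D₁`, `qσDᵢ = Dᵢσ`,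
`D₁^ℓ = D₂^ℓ = 0`, with `Δ(D₁) = D₁⊗σ + 1⊗D₁`, `Δ(D₂) = D₂⊗1 + σ⊗D₂`,
`Δ(σ) = σ⊗σ`, `ε(D₁) = ε(D₂) = 0`, `ε(σ) = 1`), the element
`F = exp_q(t D₁ ⊗ D₂) = Σ_{i<ℓ} (tⁱ/(i)_q!) D₁ⁱ ⊗ D₂ⁱ` satisfies the universal
deformation formula identities `(ε⊗id)(F) = 1⊗1 = (id⊗ε)(F)` and
`[(Δ⊗id)(F)](F⊗1) = [(id⊗Δ)(F)](1⊗F)` (stated coefficientwise in `t`). -/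
theorem expq_is_universal_deformation_formula {H : Type*} [Ring H] [Bialgebra ℂ H]
    {q : ℂ} {ℓ : ℕ} (hℓ : 2 ≤ ℓ) (hq : IsPrimitiveRoot q ℓ)
    (D₁ D₂ σ σinv : H)
    (hcomm : D₁ * D₂ = D₂ * D₁)
    (hskew1 : q • (σ * D₁) = D₁ * σ)
    (hskew2 : q • (σ * D₂) = D₂ * σ)
    (hinv1 : σ * σinv = 1) (hinv2 : σinv * σ = 1)
    (hnil1 : D₁ ^ ℓ = 0) (hnil2 : D₂ ^ ℓ = 0)
    (hΔ1 : Coalgebra.comul (R := ℂ) D₁ = D₁ ⊗ₜ σ + 1 ⊗ₜ D₁)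
    (hΔ2 : Coalgebra.comul (R := ℂ) D₂ = D₂ ⊗ₜ 1 + σ ⊗ₜ D₂)
    (hΔσ : Coalgebra.comul (R := ℂ) σ = σ ⊗ₜ σ)
    (hε1 : Coalgebra.counit (R := ℂ) D₁ = 0)
    (hε2 : Coalgebra.counit (R := ℂ) D₂ = 0)
    (hεσ : Coalgebra.counit (R := ℂ) σ = 1)
    (F : ℕ → H ⊗[ℂ] H)
    (hF : ∀ i : ℕ, F i = if i < ℓ then (qFact q i)⁻¹ • ((D₁ ^ i) ⊗ₜ (D₂ ^ i)) else 0) :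
    (∀ n : ℕ,
      (TensorProduct.lid ℂ H)
          ((TensorProduct.map (Coalgebra.counit (R := ℂ)) LinearMap.id) (F n))
        = if n = 0 then 1 else 0) ∧
    (∀ n : ℕ,
      (TensorProduct.rid ℂ H)
          ((TensorProduct.map LinearMap.id (Coalgebra.counit (R := ℂ))) (F n))
        = if n = 0 then 1 else 0) ∧
    (∀ n : ℕ,
      ∑ p ∈ Finset.HasAntidiagonal.antidiagonal n,
          (Algebra.TensorProduct.assoc ℂ ℂ ℂ H H H)
            ((TensorProduct.map (Coalgebra.comul (R := ℂ)) LinearMap.id) (F p.1)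
              * (F p.2 ⊗ₜ (1 : H)))
        = ∑ p ∈ Finset.HasAntidiagonal.antidiagonal n,
          (TensorProduct.map LinearMap.id (Coalgebra.comul (R := ℂ))) (F p.1)
            * ((1 : H) ⊗ₜ F p.2)) := by
  set c : ℕ → ℂ := fun i => (qFact q i)⁻¹ with hc
  have hcz : ∀ i, ℓ ≤ i → c i = 0 := fun i hi => by
    simp [hc, qFact_eq_zero hℓ hq hi]
  have hD1z : ∀ i, ℓ ≤ i → D₁ ^ i = 0 := fun i hi => by
    rw [show i = ℓ + (i - ℓ) by omega, pow_add, hnil1, zero_mul]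
  have hD2z : ∀ i, ℓ ≤ i → D₂ ^ i = 0 := fun i hi => by
    rw [show i = ℓ + (i - ℓ) by omega, pow_add, hnil2, zero_mul]
  have hF' : ∀ i, F i = c i • ((D₁ ^ i) ⊗ₜ[ℂ] (D₂ ^ i)) := by
    intro i; rw [hF i]; split_ifs with h
    · rfl
    · rw [hD1z i (le_of_not_gt h)]; simp
  have hc0 : c 0 = 1 := by simp [hc, qFact]
  refine ⟨?_, ?_, ?_⟩
  · intro n
    rw [hF' n, map_smul, map_smul, TensorProduct.map_tmul, LinearMap.id_coe, id_eq,
      Bialgebra.counit_pow, hε1, TensorProduct.lid_tmul]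
    rcases Nat.eq_zero_or_pos n with rfl | hn
    · simp [hc0]
    · simp [zero_pow (by omega : n ≠ 0), if_neg (by omega : ¬ n = 0)]
  · intro n
    rw [hF' n, map_smul, map_smul, TensorProduct.map_tmul, LinearMap.id_coe, id_eq,
      Bialgebra.counit_pow, hε2, TensorProduct.rid_tmul]
    rcases Nat.eq_zero_or_pos n with rfl | hn
    · simp [hc0]
    · simp [zero_pow (by omega : n ≠ 0), if_neg (by omega : ¬ n = 0)]
  · -- comultiplication expansions
    have hcm1 : ∀ i : ℕ, Coalgebra.comul (R := ℂ) (D₁ ^ i)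
        = ∑ k ∈ Finset.range (i+1), gb q i k • ((D₁ ^ k) ⊗ₜ[ℂ] (σ ^ k * D₁ ^ (i-k))) := by
      intro i
      have hzy : ((1:H) ⊗ₜ[ℂ] D₁) * (D₁ ⊗ₜ[ℂ] σ) = q • ((D₁ ⊗ₜ[ℂ] σ) * ((1:H) ⊗ₜ[ℂ] D₁)) := by
        rw [Algebra.TensorProduct.tmul_mul_tmul, Algebra.TensorProduct.tmul_mul_tmul,
          one_mul, mul_one, ← hskew1, tmul_smul]
      rw [Bialgebra.comul_pow, hΔ1, qbinom_pow hzy i]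
      refine Finset.sum_congr rfl fun k _ => ?_
      rw [Algebra.TensorProduct.tmul_pow, Algebra.TensorProduct.tmul_pow, one_pow,
        Algebra.TensorProduct.tmul_mul_tmul, mul_one]
    have hcm2 : ∀ i : ℕ, Coalgebra.comul (R := ℂ) (D₂ ^ i)
        = ∑ k ∈ Finset.range (i+1), gb q i k • ((σ ^ k * D₂ ^ (i-k)) ⊗ₜ[ℂ] (D₂ ^ k)) := by
      intro i
      have hzy : (D₂ ⊗ₜ[ℂ] (1:H)) * (σ ⊗ₜ[ℂ] D₂) = q • ((σ ⊗ₜ[ℂ] D₂) * (D₂ ⊗ₜ[ℂ] (1:H))) := by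
        rw [Algebra.TensorProduct.tmul_mul_tmul, Algebra.TensorProduct.tmul_mul_tmul,
          one_mul, mul_one, ← hskew2, TensorProduct.smul_tmul']
      rw [Bialgebra.comul_pow, hΔ2, add_comm (D₂ ⊗ₜ[ℂ] (1:H)), qbinom_pow hzy i]
      refine Finset.sum_congr rfl fun k _ => ?_
      rw [Algebra.TensorProduct.tmul_pow, Algebra.TensorProduct.tmul_pow, one_pow,
        Algebra.TensorProduct.tmul_mul_tmul, mul_one]
    -- expansion of the summands on the left
    have hLterm : ∀ i j : ℕ, (Algebra.TensorProduct.assoc ℂ ℂ ℂ H H H)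
        ((TensorProduct.map (Coalgebra.comul (R := ℂ)) LinearMap.id) (F i) * (F j ⊗ₜ (1 : H)))
        = ∑ k ∈ Finset.range (i+1),
            (c i * c j * gb q i k) •
              ((D₁ ^ (k+j)) ⊗ₜ[ℂ] ((σ ^ k * D₁ ^ (i-k) * D₂ ^ j) ⊗ₜ[ℂ] (D₂ ^ i))) := by
      intro i j
      rw [hF' i, hF' j, map_smul, TensorProduct.map_tmul, LinearMap.id_coe, id_eq, hcm1 i,
        TensorProduct.smul_tmul']
      simp only [TensorProduct.sum_tmul, TensorProduct.smul_tmul', Finset.sum_mul,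
        smul_mul_assoc, mul_smul_comm, Algebra.TensorProduct.tmul_mul_tmul, map_sum,
        map_smul, Finset.smul_sum, Algebra.TensorProduct.assoc_tmul, mul_one, one_mul,
        smul_smul]
      refine Finset.sum_congr rfl fun k _ => ?_
      rw [← pow_add]
      ring_nf
    have hRterm : ∀ i j : ℕ,
        (TensorProduct.map LinearMap.id (Coalgebra.comul (R := ℂ))) (F i) * ((1 : H) ⊗ₜ F j)
        = ∑ k ∈ Finset.range (i+1),
            (c i * c j * gb q i k) •
              ((D₁ ^ i) ⊗ₜ[ℂ] ((σ ^ k * D₂ ^ (i-k) * D₁ ^ j) ⊗ₜ[ℂ] (D₂ ^ (k+j)))) := by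
      intro i j
      rw [hF' i, hF' j, map_smul, TensorProduct.map_tmul, LinearMap.id_coe, id_eq, hcm2 i,
        tmul_smul]
      simp only [TensorProduct.tmul_sum, TensorProduct.smul_tmul', tmul_smul,
        Finset.sum_mul, smul_mul_assoc, mul_smul_comm, Algebra.TensorProduct.tmul_mul_tmul,
        Finset.smul_sum, mul_one, one_mul, smul_smul]
      refine Finset.sum_congr rfl fun k _ => ?_
      rw [← pow_add]
      simp only [← TensorProduct.smul_tmul', TensorProduct.tmul_smul, smul_smul]
      congr 1
      ring
    -- termwise comparison
    have hTU : ∀ i j k : ℕ, k ≤ i →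
        (c i * c j * gb q i k) •
            ((D₁ ^ (k+j)) ⊗ₜ[ℂ] ((σ ^ k * D₁ ^ (i-k) * D₂ ^ j) ⊗ₜ[ℂ] (D₂ ^ i)))
        = (c (k+j) * c (i-k) * gb q (k+j) k) •
            ((D₁ ^ (k+j)) ⊗ₜ[ℂ] ((σ ^ k * D₂ ^ ((k+j)-k) * D₁ ^ (i-k)) ⊗ₜ[ℂ]
              (D₂ ^ (k + (i-k))))) := by
      intro i j k hk
      rw [show (k+j)-k = j by omega, show k + (i-k) = i by omega]
      have hmid : σ ^ k * D₂ ^ j * D₁ ^ (i-k) = σ ^ k * D₁ ^ (i-k) * D₂ ^ j := by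
        rw [mul_assoc, mul_assoc, ((Commute.pow_pow (Commute.symm hcomm) j (i-k)).symm).eq]
      by_cases h1 : ℓ ≤ k + j
      · rw [hD1z _ h1]; simp
      · by_cases h2 : ℓ ≤ i
        · rw [hD2z _ h2]; simp
        · rw [hmid]
          congr 1
          exact scalar_eq hq hk (by omega) (by omega) (by omega)
    intro n
    calc
      ∑ p ∈ Finset.HasAntidiagonal.antidiagonal n,
          (Algebra.TensorProduct.assoc ℂ ℂ ℂ H H H)
            ((TensorProduct.map (Coalgebra.comul (R := ℂ)) LinearMap.id) (F p.1)
              * (F p.2 ⊗ₜ (1 : H)))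
        = ∑ p ∈ Finset.HasAntidiagonal.antidiagonal n, ∑ k ∈ Finset.range (n+1),
            (c p.1 * c p.2 * gb q p.1 k) •
              ((D₁ ^ (k+p.2)) ⊗ₜ[ℂ] ((σ ^ k * D₁ ^ (p.1-k) * D₂ ^ p.2) ⊗ₜ[ℂ] (D₂ ^ p.1))) := by
          refine Finset.sum_congr rfl fun p hp => ?_
          rw [hLterm p.1 p.2]
          apply Finset.sum_subset (Finset.range_subset_range.mpr (by
            have := Finset.HasAntidiagonal.mem_antidiagonal.mp hp; omega))
          intro k _ hk
          have hz : gb q p.1 k = 0 := gb_zero q p.1 k (by simpa using hk)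
          simp [hz]
      _ = ∑ x ∈ (Finset.HasAntidiagonal.antidiagonal n ×ˢ Finset.range (n+1)).filter (fun x => x.2 ≤ x.1.1),
            (c x.1.1 * c x.1.2 * gb q x.1.1 x.2) •
              ((D₁ ^ (x.2+x.1.2)) ⊗ₜ[ℂ]
                ((σ ^ x.2 * D₁ ^ (x.1.1-x.2) * D₂ ^ x.1.2) ⊗ₜ[ℂ] (D₂ ^ x.1.1))) := by
          rw [Finset.sum_filter_of_ne, Finset.sum_product]
          intro x _ hne
          by_contra hx
          exact hne (by rw [gb_zero q x.1.1 x.2 (by omega)]; simp)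
      _ = ∑ x ∈ (Finset.HasAntidiagonal.antidiagonal n ×ˢ Finset.range (n+1)).filter (fun x => x.2 ≤ x.1.1),
            (c x.1.1 * c x.1.2 * gb q x.1.1 x.2) •
              ((D₁ ^ (x.1.1)) ⊗ₜ[ℂ]
                ((σ ^ x.2 * D₂ ^ (x.1.1-x.2) * D₁ ^ x.1.2) ⊗ₜ[ℂ] (D₂ ^ (x.2+x.1.2)))) := by
          refine Finset.sum_nbij' (fun x => ((x.2 + x.1.2, x.1.1 - x.2), x.2))
            (fun x => ((x.2 + x.1.2, x.1.1 - x.2), x.2)) ?_ ?_ ?_ ?_ ?_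
          · intro x hx
            simp only [Finset.mem_filter, Finset.mem_product, Finset.HasAntidiagonal.mem_antidiagonal,
              Finset.mem_range] at hx ⊢
            omega
          · intro x hx
            simp only [Finset.mem_filter, Finset.mem_product, Finset.HasAntidiagonal.mem_antidiagonal,
              Finset.mem_range] at hx ⊢
            omega
          · intro x hx
            simp only [Finset.mem_filter, Finset.mem_product, Finset.HasAntidiagonal.mem_antidiagonal,
              Finset.mem_range] at hx
            ext <;> simp <;> omega
          · intro x hx
            simp only [Finset.mem_filter, Finset.mem_product, Finset.HasAntidiagonal.mem_antidiagonal,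
              Finset.mem_range] at hx
            ext <;> simp <;> omega
          · intro x hx
            simp only [Finset.mem_filter, Finset.mem_product, Finset.HasAntidiagonal.mem_antidiagonal,
              Finset.mem_range] at hx
            exact hTU x.1.1 x.1.2 x.2 hx.2
      _ = ∑ x ∈ Finset.HasAntidiagonal.antidiagonal n ×ˢ Finset.range (n+1),
            (c x.1.1 * c x.1.2 * gb q x.1.1 x.2) •
              ((D₁ ^ (x.1.1)) ⊗ₜ[ℂ]
                ((σ ^ x.2 * D₂ ^ (x.1.1-x.2) * D₁ ^ x.1.2) ⊗ₜ[ℂ] (D₂ ^ (x.2+x.1.2)))) := by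
          apply Finset.sum_filter_of_ne
          intro x _ hne
          by_contra hx
          exact hne (by rw [gb_zero q x.1.1 x.2 (by omega)]; simp)
      _ = ∑ p ∈ Finset.HasAntidiagonal.antidiagonal n,
          (TensorProduct.map LinearMap.id (Coalgebra.comul (R := ℂ))) (F p.1)
            * ((1 : H) ⊗ₜ F p.2) := by
          rw [Finset.sum_product]
          refine Finset.sum_congr rfl fun p hp => ?_
          dsimp only
          rw [hRterm p.1 p.2]
          refine (Finset.sum_subset (Finset.range_subset_range.mpr (by
            have := Finset.HasAntidiagonal.mem_antidiagonal.mp hp; omega)) ?_).symm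
          intro k _ hk
          have hz : gb q p.1 k = 0 := gb_zero q p.1 k (by simpa using hk)
          simp [hz]
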